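/- Let T be a tree and B a maximum independent set of T of size at least 2. Then for every vertex v in B there exists a vertex u in B with u ≠ v and d(v,u) ≤ 3, where d denotes graph distance. -/

import Mathlib

open scoped Classical

/-- A set `D` is a total co-independent dominating set of `G`:
it is a total dominating set and its complement is a nonempty independent set. -/
def TotalCoIndep {V : Type*} [Fintype V] (G : SimpleGraph V) (D : Finset V) : Prop :=
  (∀ v : V, ∃ u ∈ D, G.Adj v u) ∧
  (Dᶜ : Finset V).Nonempty ∧
  ∀ u ∈ (Dᶜ : Finset V), ∀ w ∈ (Dᶜ : Finset V), ¬ G.Adj u w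

/-- The total co-independent domination number. -/
noncomputable def gammaTcoi {V : Type*} [Fintype V] (G : SimpleGraph V) : ℕ :=
  sInf {k | ∃ D : Finset V, TotalCoIndep G D ∧ D.card = k}

/-- A finite set of vertices is independent. -/
def IsIndepF {V : Type*} (G : SimpleGraph V) (B : Finset V) : Prop :=
  ∀ u ∈ B, ∀ w ∈ B, ¬ G.Adj u w

/-- The independence number. -/
noncomputable def indepNum {V : Type*} [Fintype V] (G : SimpleGraph V) : ℕ :=
  sSup {k | ∃ B : Finset V, IsIndepF G B ∧ B.card = k}

/-- A leaf: a vertex with exactly one neighbor (degree one). -/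
def IsLeaf {V : Type*} (G : SimpleGraph V) (v : V) : Prop :=
  ∃! u, G.Adj v u

/-- The set of leaves. -/
noncomputable def leaves {V : Type*} [Fintype V] (G : SimpleGraph V) : Finset V :=
  Finset.univ.filter (fun v => IsLeaf G v)

/-- A support vertex: a non-leaf adjacent to a leaf. -/
def IsSupport {V : Type*} (G : SimpleGraph V) (v : V) : Prop :=
  ¬ IsLeaf G v ∧ ∃ u, G.Adj v u ∧ IsLeaf G u

/-- A semi-support vertex: a non-leaf, non-support vertex adjacent to a support vertex. -/
def IsSemiSupport {V : Type*} (G : SimpleGraph V) (v : V) : Prop :=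
  ¬ IsLeaf G v ∧ ¬ IsSupport G v ∧ ∃ u, G.Adj v u ∧ IsSupport G u

/-- An isolated support vertex: a support vertex with no support vertex as neighbor. -/
def IsIsolatedSupport {V : Type*} (G : SimpleGraph V) (v : V) : Prop :=
  IsSupport G v ∧ ∀ u, G.Adj v u → ¬ IsSupport G u

/-- In a tree, every vertex of a maximum independent set `B` with `|B| ≥ 2` has another
vertex of `B` at distance at most 3. -/
theorem stmt4 {V : Type*} [Fintype V] (T : SimpleGraph V) (hT : T.IsTree)
    (B : Finset V) (hB : IsIndepF T B) (hBmax : B.card = indepNum T) (h2 : 2 ≤ B.card) :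
    ∀ v ∈ B, ∃ u ∈ B, u ≠ v ∧ T.dist v u ≤ 3 := by
  intro v hv
  have hconn := hT.isConnected
  -- key: every vertex not in B and not adjacent to a B-vertex contradicts maximality
  have hdom : ∀ x : V, x ∉ B → ∃ c ∈ B, T.Adj x c := by
    intro x hx
    by_contra hno
    push_neg at hno
    have hind : IsIndepF T (insert x B) := by
      intro a ha b hb
      rcases Finset.mem_insert.mp ha with rfl | ha'
      · rcases Finset.mem_insert.mp hb with rfl | hb'
        · simp
        · exact hno b hb'
      · rcases Finset.mem_insert.mp hb with rfl | hb'
        · exact fun h => hno a ha' h.symm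
        · exact hB a ha' b hb' 
    have hcard : (insert x B).card = B.card + 1 := Finset.card_insert_of_notMem hx
    have hmem : B.card + 1 ∈ {k | ∃ C : Finset V, IsIndepF T C ∧ C.card = k} :=
      ⟨insert x B, hind, hcard⟩
    have hbdd : BddAbove {k | ∃ C : Finset V, IsIndepF T C ∧ C.card = k} := by
      refine ⟨Fintype.card V, fun k hk => ?_⟩
      obtain ⟨C, _, rfl⟩ := hk
      exact Finset.card_le_card (Finset.subset_univ C) |>.trans (le_of_eq (Finset.card_univ))
    have := le_csSup hbdd hmem
    rw [indepNum] at hBmax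
    omega
  obtain ⟨w, hw, hwv⟩ : ∃ w ∈ B, w ≠ v := by
    obtain ⟨a, ha, b, hb, hab⟩ := Finset.one_lt_card.mp h2
    rcases eq_or_ne a v with rfl | h
    · exact ⟨b, hb, fun h => hab h.symm⟩
    · exact ⟨a, ha, h⟩
  by_cases hd : T.dist v w ≤ 3
  · exact ⟨w, hw, hwv, hd⟩
  · push_neg at hd
    obtain ⟨p, hp⟩ := hconn.exists_walk_length_eq_dist v w
    match p, hp with
    | SimpleGraph.Walk.nil, hp => simp at hp; simp at hd
    | SimpleGraph.Walk.cons h SimpleGraph.Walk.nil, hp => simp at hp; omega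
    | SimpleGraph.Walk.cons h1 (SimpleGraph.Walk.cons (v := b) h2 q), hp =>
      simp only [SimpleGraph.Walk.length_cons] at hp
      have hvb2 : T.dist v b ≤ 2 := by
        have := SimpleGraph.dist_le (SimpleGraph.Walk.cons h1 (SimpleGraph.Walk.cons h2 SimpleGraph.Walk.nil))
        simpa using this
      have hbw : T.dist b w ≤ q.length := SimpleGraph.dist_le q
      have htri : T.dist v w ≤ T.dist v b + T.dist b w := hconn.dist_triangle
      have hvb_ge : 2 ≤ T.dist v b := by omega
      have hnadj : ¬ T.Adj v b := by
        intro h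
        have : T.dist v b ≤ 1 := SimpleGraph.dist_le (SimpleGraph.Walk.cons h SimpleGraph.Walk.nil)
        omega
      by_cases hbB : b ∈ B
      · refine ⟨b, hbB, ?_, by omega⟩
        rintro rfl
        simp [SimpleGraph.dist_self] at hvb_ge
      · obtain ⟨c, hc, hbc⟩ := hdom b hbB
        have hcv : c ≠ v := by
          rintro rfl
          exact hnadj hbc.symm
        have hbc1 : T.dist b c ≤ 1 := SimpleGraph.dist_le (SimpleGraph.Walk.cons hbc SimpleGraph.Walk.nil)
        have : T.dist v c ≤ T.dist v b + T.dist b c := hconn.dist_triangle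
        exact ⟨c, hc, hcv, by omega⟩
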